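/- There is a universal constant C > 0 such that the following holds. Let δ > 0 and let S = P ∪ {q_1, …, q_k}, a finite metric subspace of (X, dist). Suppose S is δ-padded decomposable: for every ρ > 0 there is a finitely supported probability distribution over partitions of S into clusters each of diameter at most ρ, such that for every pair x, y ∈ S the probability that x and y lie in different clusters is at most δ · dist(x, y) / ρ. Then there exists an assignment p_1, …, p_k with all p_i ∈ P̂ whose SNN cost is at most C · δ · Cost(Q, G, P); i.e., the pruning gap is O(δ). -/

import Mathlib

open Finset

/-- The symmetric pairwise-distance function induced on unordered pairs by an
assignment `p : V → X`. -/
noncomputable def pairDist {V X : Type*} [MetricSpace X] (p : V → X) : Sym2 V → ℝ :=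
  Sym2.lift ⟨fun i j => dist (p i) (p j), fun i j => dist_comm (p i) (p j)⟩

/-- `S` is `δ`-padded decomposable: for every `ρ > 0` there is a finitely supported probability
distribution (weights `w` over finitely many colorings, each coloring inducing a partition of
`S` into clusters of diameter at most `ρ`) such that any two points `x, y ∈ S` are separated
with probability at most `δ · dist x y / ρ`. -/
def PaddedDecomposable {X : Type*} [MetricSpace X] (S : Set X) (δ : ℝ) : Prop :=
  ∀ ρ : ℝ, 0 < ρ →
    ∃ (m : ℕ) (w : Fin m → ℝ) (col : Fin m → X → ℕ),
      (∀ i, 0 ≤ w i) ∧ (∑ i, w i = 1) ∧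
      (∀ i, ∀ x ∈ S, ∀ y ∈ S, col i x = col i y → dist x y ≤ ρ) ∧
      (∀ x ∈ S, ∀ y ∈ S,
        (∑ i, if col i x = col i y then 0 else w i) ≤ δ * dist x y / ρ)

lemma count_in_interval (N : ℕ) (c l : ℝ) (hl : 0 ≤ l) :
    (((Finset.range N).filter (fun (j : ℕ) => c < (j:ℝ) ∧ (j:ℝ) ≤ c + l)).card : ℝ) ≤ l + 1 := by
  have hsub : ∀ j ∈ (Finset.range N).filter (fun (j : ℕ) => c < (j:ℝ) ∧ (j:ℝ) ≤ c + l),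
      ((j:ℤ)) ∈ Finset.Ioc ⌊c⌋ ⌊c + l⌋ := by
    intro j hj
    simp only [Finset.mem_filter] at hj
    obtain ⟨-, h1, h2⟩ := hj
    simp only [Finset.mem_Ioc]
    constructor
    · exact Int.floor_lt.mpr (by exact_mod_cast h1)
    · exact Int.le_floor.mpr (by exact_mod_cast h2)
  have hcard : ((Finset.range N).filter (fun (j : ℕ) => c < (j:ℝ) ∧ (j:ℝ) ≤ c + l)).card
      ≤ (Finset.Ioc ⌊c⌋ ⌊c + l⌋).card := by
    exact Finset.card_le_card_of_injOn (fun (j:ℕ) => (j:ℤ)) hsub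
      (fun a _ b _ hab => by simpa using hab)
  have h2 : ((Finset.Ioc ⌊c⌋ ⌊c + l⌋).card : ℝ) ≤ l + 1 := by
    rw [Int.card_Ioc]
    have hfl : ⌊c⌋ ≤ ⌊c + l⌋ := Int.floor_le_floor (by linarith)
    have : ((⌊c + l⌋ - ⌊c⌋).toNat : ℤ) = ⌊c + l⌋ - ⌊c⌋ := Int.toNat_of_nonneg (by omega)
    have hcast : ((⌊c + l⌋ - ⌊c⌋).toNat : ℝ) = (⌊c + l⌋ : ℝ) - (⌊c⌋ : ℝ) := by
      exact_mod_cast congrArg (fun z : ℤ => (z : ℝ)) this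
    rw [hcast]
    have h3 : (⌊c + l⌋ : ℝ) ≤ c + l := Int.floor_le _
    have h4 : c - 1 < (⌊c⌋ : ℝ) := Int.sub_one_lt_floor c
    linarith
  calc (((Finset.range N).filter (fun (j : ℕ) => c < (j:ℝ) ∧ (j:ℝ) ≤ c + l)).card : ℝ)
      ≤ ((Finset.Ioc ⌊c⌋ ⌊c + l⌋).card : ℝ) := by exact_mod_cast hcard
    _ ≤ l + 1 := h2

lemma ceil_shift_count (N : ℕ) (hN : 0 < N) (a b : ℝ) (hab : a ≤ b) :
    (((Finset.range N).filter
        (fun (j : ℕ) => ⌈a + (j:ℝ)/N⌉ ≠ ⌈b + (j:ℝ)/N⌉)).card : ℝ)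
      ≤ 2*((N:ℝ)*(b-a) + 1) := by
  have hNR : (0:ℝ) < N := by exact_mod_cast hN
  set l : ℝ := (N:ℝ)*(b-a) with hl
  have hl0 : 0 ≤ l := by
    have : 0 ≤ b - a := by linarith
    positivity
  set F : ℤ → Finset ℕ := fun m =>
    (Finset.range N).filter (fun (j : ℕ) => (N:ℝ)*((m:ℝ)-b) < (j:ℝ) ∧ (j:ℝ) ≤ (N:ℝ)*((m:ℝ)-b) + l) with hF
  have hsub : (Finset.range N).filter (fun (j : ℕ) => ⌈a + (j:ℝ)/N⌉ ≠ ⌈b + (j:ℝ)/N⌉)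
      ⊆ F ⌈a⌉ ∪ F (⌈a⌉ + 1) := by
    intro j hj
    simp only [Finset.mem_filter, Finset.mem_range] at hj
    obtain ⟨hjN, hbad⟩ := hj
    set θ : ℝ := (j:ℝ)/N with hθ
    have hθ0 : 0 ≤ θ := by positivity
    have hθ1 : θ < 1 := by
      rw [hθ, div_lt_one hNR]; exact_mod_cast hjN
    set m : ℤ := ⌈a + θ⌉ with hm
    have hmlow : ⌈a⌉ ≤ m := Int.ceil_le_ceil (by linarith)
    have hmhigh : m ≤ ⌈a⌉ + 1 := by
      have : m ≤ ⌈a + 1⌉ := Int.ceil_le_ceil (by linarith)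
      simpa [Int.ceil_add_one] using this
    have hmem : j ∈ F m := by
      have h1 : a + θ ≤ (m:ℝ) := Int.le_ceil _
      have h2 : (m:ℝ) < b + θ := by
        have hle : m ≤ ⌈b + θ⌉ := Int.ceil_le_ceil (by linarith)
        have hlt : m < ⌈b + θ⌉ := lt_of_le_of_ne hle hbad
        exact Int.lt_ceil.mp hlt
      simp only [hF, Finset.mem_filter, Finset.mem_range]
      refine ⟨hjN, ?_, ?_⟩
      · have h3 : (m:ℝ) - b < θ := by linarith
        calc (N:ℝ)*((m:ℝ)-b) < N * θ := by
              exact (mul_lt_mul_iff_right₀ hNR).mpr h3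
          _ = (j:ℝ) := by rw [hθ]; field_simp
      · have hθm : θ ≤ (m:ℝ) - a := by linarith
        have hje : (j:ℝ) = N * θ := by rw [hθ]; field_simp
        rw [hje]
        calc (N:ℝ) * θ ≤ N * ((m:ℝ) - a) := by
              exact (mul_le_mul_iff_right₀ hNR).mpr hθm
          _ = (N:ℝ)*((m:ℝ)-b) + l := by rw [hl]; ring
    rcases eq_or_lt_of_le hmlow with h | h
    · exact Finset.mem_union_left _ (h ▸ hmem)
    · have : m = ⌈a⌉ + 1 := by omega
      exact Finset.mem_union_right _ (this ▸ hmem)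
  have hcard : (((Finset.range N).filter
      (fun (j : ℕ) => ⌈a + (j:ℝ)/N⌉ ≠ ⌈b + (j:ℝ)/N⌉)).card : ℝ)
      ≤ ((F ⌈a⌉).card : ℝ) + ((F (⌈a⌉+1)).card : ℝ) := by
    have h1 := Finset.card_le_card hsub
    have h2 := Finset.card_union_le (F ⌈a⌉) (F (⌈a⌉+1))
    have := le_trans h1 h2
    exact_mod_cast this
  have hFbound : ∀ m : ℤ, ((F m).card : ℝ) ≤ l + 1 := fun m =>
    count_in_interval N ((N:ℝ)*((m:ℝ)-b)) l hl0
  calc (((Finset.range N).filter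
      (fun (j : ℕ) => ⌈a + (j:ℝ)/N⌉ ≠ ⌈b + (j:ℝ)/N⌉)).card : ℝ)
      ≤ ((F ⌈a⌉).card : ℝ) + ((F (⌈a⌉+1)).card : ℝ) := hcard
    _ ≤ (l+1) + (l+1) := add_le_add (hFbound _) (hFbound _)
    _ = 2*(l+1) := by ring

lemma edge_count_bound (N : ℕ) (hN : 0 < N) (Du Dv L M : ℝ)
    (hLpos : 0 < L) (hvu : Dv ≤ Du) (hc2 : 20 * L < Du) (hlip : Du ≤ Dv + L)
    (hM : M = 9*Du + 9*Dv + L) (hNL : 3 * M ≤ (N:ℝ) * L) :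
    (((Finset.range N).filter
      (fun (jj : ℕ) => ⌈Real.logb 2 Dv + (jj:ℝ)/N⌉ ≠ ⌈Real.logb 2 Du + (jj:ℝ)/N⌉)).card : ℝ) * M
      ≤ (N:ℝ) * (81 * L) := by
  have hNR : (0:ℝ) < N := by exact_mod_cast hN
  have hDv : 0 < Dv := by linarith
  have hDu : 0 < Du := by linarith
  have hlog2 : 0 < Real.log 2 := Real.log_pos (by norm_num)
  set a := Real.logb 2 Dv with ha
  set b := Real.logb 2 Du with hb
  have hab : a ≤ b := by
    rw [ha, hb, Real.logb, Real.logb]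
    have := Real.log_le_log hDv hvu
    gcongr
  have hba0 : 0 ≤ b - a := by linarith
  have hbd : b - a = Real.log (Du/Dv) / Real.log 2 := by
    rw [ha, hb, Real.logb, Real.logb, div_sub_div_same, Real.log_div hDu.ne' hDv.ne']
  have hlog : Real.log (Du/Dv) ≤ L / Dv := by
    have h1 : Real.log (Du/Dv) ≤ Du/Dv - 1 := Real.log_le_sub_one_of_pos (by positivity)
    have h2 : Du/Dv - 1 = (Du - Dv)/Dv := by field_simp
    have h3 : (Du - Dv)/Dv ≤ L/Dv := by gcongr; linarith
    linarith
  have hbaDv : (b - a) * Dv ≤ 2 * L := by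
    have hlog2' : (1:ℝ)/2 ≤ Real.log 2 := by
      have := Real.log_two_gt_d9; linarith
    have h4 : b - a ≤ 2 * (L / Dv) := by
      rw [hbd, div_le_iff₀ hlog2]
      have hLDv : 0 ≤ L / Dv := by positivity
      nlinarith [hlog, hLDv, hlog2']
    calc (b - a) * Dv ≤ (2 * (L / Dv)) * Dv := by
          exact mul_le_mul_of_nonneg_right h4 hDv.le
      _ = 2 * L := by field_simp
  have hM19 : M ≤ 19 * Dv := by rw [hM]; linarith
  have hMnn : 0 ≤ M := by rw [hM]; linarith
  have hcard := ceil_shift_count N hN a b hab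
  have h1 : (((Finset.range N).filter
      (fun (jj : ℕ) => ⌈a + (jj:ℝ)/N⌉ ≠ ⌈b + (jj:ℝ)/N⌉)).card : ℝ) * M
      ≤ (2*((N:ℝ)*(b-a) + 1)) * M := mul_le_mul_of_nonneg_right hcard hMnn
  have h2 : (b - a) * M ≤ 38 * L := by
    calc (b - a) * M ≤ (b - a) * (19 * Dv) := mul_le_mul_of_nonneg_left hM19 hba0
      _ = 19 * ((b - a) * Dv) := by ring
      _ ≤ 19 * (2 * L) := by linarith
      _ = 38 * L := by ring
  have h3 : 2 * M ≤ (N:ℝ) * L := by linarith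
  have h4 : 2*(N:ℝ)*((b-a)*M) ≤ 2*(N:ℝ)*(38*L) := by
    apply mul_le_mul_of_nonneg_left h2 (by positivity)
  calc (((Finset.range N).filter
      (fun (jj : ℕ) => ⌈a + (jj:ℝ)/N⌉ ≠ ⌈b + (jj:ℝ)/N⌉)).card : ℝ) * M
      ≤ (2*((N:ℝ)*(b-a) + 1)) * M := h1
    _ = 2*(N:ℝ)*((b-a)*M) + 2*M := by ring
    _ ≤ 2*(N:ℝ)*(38*L) + (N:ℝ)*L := by linarith
    _ = 77 * ((N:ℝ)*L) := by ring
    _ ≤ 81 * ((N:ℝ)*L) := by nlinarith [hNR, hLpos]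
    _ = (N:ℝ) * (81 * L) := by ring

lemma min_le_weighted_sum {n : ℕ} (w v : Fin n → ℝ) (hw : ∀ c, 0 ≤ w c) (h1 : ∑ c, w c = 1)
    (c0 : Fin n) (hc0 : ∀ c, v c0 ≤ v c) : v c0 ≤ ∑ c, w c * v c := by
  calc v c0 = ∑ c, w c * v c0 := by rw [← Finset.sum_mul, h1, one_mul]
    _ ≤ ∑ c, w c * v c := Finset.sum_le_sum fun c _ => mul_le_mul_of_nonneg_left (hc0 c) (hw c)

set_option maxHeartbeats 1000000 in
theorem inn_pruning_gap_padded :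
    ∃ C : ℝ, 0 < C ∧
      ∀ (X : Type) [MetricSpace X] (δ : ℝ), 0 < δ →
        ∀ (k : ℕ), 1 ≤ k →
          ∀ (P : Finset X), P.Nonempty →
            ∀ (q : Fin k → X),
              PaddedDecomposable ((P : Set X) ∪ Set.range q) δ →
              ∀ (G : SimpleGraph (Fin k)) [Fintype G.edgeSet]
                (phat : Fin k → X), (∀ i, phat i ∈ P) →
                (∀ i, ∀ pt ∈ P, dist (q i) (phat i) ≤ dist (q i) pt) →
                ∃ p : Fin k → X, (∀ i, ∃ j, p i = phat j) ∧
                  ∀ ps : Fin k → X, (∀ i, ps i ∈ P) →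
                    ∑ i, dist (q i) (p i) + ∑ e ∈ G.edgeFinset, pairDist p e ≤
                      C * δ *
                        (∑ i, dist (q i) (ps i) + ∑ e ∈ G.edgeFinset, pairDist ps e) := by
  classical
  refine ⟨1000, by norm_num, ?_⟩
  intro X _ δ hδ k hk P hP q hPD G _ phat hphatP hphatNN
  set S : Set X := (P : Set X) ∪ Set.range q with hS
  have hqS : ∀ i, q i ∈ S := fun i => Or.inr ⟨i, rfl⟩
  have hPS : ∀ x ∈ P, x ∈ S := fun x hx => Or.inl hx
  have hpairnn : ∀ (ps : Fin k → X) (e : Sym2 (Fin k)), 0 ≤ pairDist ps e := by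
    intro ps e
    induction e using Sym2.ind with
    | _ i j => simp only [pairDist, Sym2.lift_mk]; exact dist_nonneg
  have hcostnn : ∀ ps : Fin k → X,
      0 ≤ ∑ i, dist (q i) (ps i) + ∑ e ∈ G.edgeFinset, pairDist ps e := by
    intro ps
    have h1 : (0:ℝ) ≤ ∑ i, dist (q i) (ps i) :=
      Finset.sum_nonneg fun i _ => dist_nonneg
    have h2 : (0:ℝ) ≤ ∑ e ∈ G.edgeFinset, pairDist ps e :=
      Finset.sum_nonneg fun e _ => hpairnn ps e
    linarith
  by_cases hdeg : ∀ x ∈ S, ∀ y ∈ S, dist x y = 0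
  · refine ⟨phat, fun i => ⟨i, rfl⟩, ?_⟩
    intro ps hps
    have h1 : ∑ i, dist (q i) (phat i) = 0 :=
      Finset.sum_eq_zero fun i _ => hdeg _ (hqS i) _ (hPS _ (hphatP i))
    have h2 : ∑ e ∈ G.edgeFinset, pairDist phat e = 0 := by
      refine Finset.sum_eq_zero fun e _ => ?_
      induction e using Sym2.ind with
      | _ i j =>
        simp only [pairDist, Sym2.lift_mk]
        exact hdeg _ (hPS _ (hphatP i)) _ (hPS _ (hphatP j))
    rw [h1, h2]
    have := hcostnn ps
    nlinarith [this, hδ]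
  push_neg at hdeg
  obtain ⟨x0, hx0S, y0, hy0S, hxy0⟩ := hdeg
  have hd0 : 0 < dist x0 y0 := lt_of_le_of_ne dist_nonneg (Ne.symm hxy0)
  -- δ ≥ 1
  have hδ1 : 1 ≤ δ := by
    by_contra hcon
    push_neg at hcon
    set ρ : ℝ := dist x0 y0 * (1+δ)/2 with hρ
    have hρpos : 0 < ρ := by rw [hρ]; positivity
    have hρlt : ρ < dist x0 y0 := by rw [hρ]; nlinarith
    obtain ⟨m, w, col, hw0, hw1, hdiam, hsep⟩ := hPD ρ hρpos
    have hall : ∀ c, ¬ (col c x0 = col c y0) := by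
      intro c hc
      exact absurd (hdiam c x0 hx0S y0 hy0S hc) (not_le.mpr hρlt)
    have hone : (1:ℝ) ≤ δ * dist x0 y0 / ρ := by
      have h := hsep x0 hx0S y0 hy0S
      rw [Finset.sum_congr rfl (fun c _ => if_neg (hall c))] at h
      rw [hw1] at h
      exact h
    rw [le_div_iff₀ hρpos, one_mul] at hone
    rw [hρ] at hone
    nlinarith
  -- nearest-terminal machinery
  set T : Finset X := Finset.image phat Finset.univ with hT
  have hTne : T.Nonempty := ⟨phat ⟨0, hk⟩, Finset.mem_image_of_mem _ (Finset.mem_univ _)⟩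
  set D : X → ℝ := fun x => T.inf' hTne (fun t => dist x t) with hD
  have hDle : ∀ x : X, ∀ t ∈ T, D x ≤ dist x t := fun x t ht => Finset.inf'_le _ ht
  have hπex : ∀ x : X, ∃ t ∈ T, T.inf' hTne (fun t => dist x t) = dist x t := fun x =>
    Finset.exists_mem_eq_inf' hTne (fun t => dist x t)
  set π : X → X := fun x => (hπex x).choose with hπ
  have hπT : ∀ x, π x ∈ T := fun x => (hπex x).choose_spec.1
  have hπdist : ∀ x, dist x (π x) = D x := fun x => ((hπex x).choose_spec.2).symm
  have hD0 : ∀ x, 0 ≤ D x := fun x => (hπdist x) ▸ dist_nonneg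
  have hDlip : ∀ x y : X, D x ≤ D y + dist x y := by
    intro x y
    calc D x ≤ dist x (π y) := hDle x _ (hπT y)
      _ ≤ dist x y + dist y (π y) := dist_triangle _ _ _
      _ = D y + dist x y := by rw [hπdist]; ring
  have hTS : ∀ t ∈ T, t ∈ S := by
    intro t ht
    simp only [hT, Finset.mem_image] at ht
    obtain ⟨j, -, rfl⟩ := ht
    exact hPS _ (hphatP j)
  -- optimal assignment over P
  set cost : (Fin k → X) → ℝ :=
    fun ps => ∑ i, dist (q i) (ps i) + ∑ e ∈ G.edgeFinset, pairDist ps e with hcost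
  obtain ⟨p0, hp0⟩ := hP
  obtain ⟨pstar, hpstarmem, hpstaropt⟩ :=
    Finset.exists_min_image (Fintype.piFinset (fun _ : Fin k => P)) cost
      ⟨fun _ => p0, by simp [Fintype.mem_piFinset, hp0]⟩
  have hpsP : ∀ i, pstar i ∈ P := by
    intro i
    exact (Fintype.mem_piFinset.mp hpstarmem) i
  have hpsS : ∀ i, pstar i ∈ S := fun i => hPS _ (hpsP i)
  set dd : Fin k → ℝ := fun i => dist (q i) (pstar i) with hdd
  have hdd0 : ∀ i, 0 ≤ dd i := fun i => dist_nonneg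
  have hDdd : ∀ i, D (pstar i) ≤ 2 * dd i := by
    intro i
    have h1 : D (pstar i) ≤ dist (pstar i) (phat i) :=
      hDle _ _ (Finset.mem_image_of_mem _ (Finset.mem_univ i))
    have h2 : dist (pstar i) (phat i) ≤ dist (pstar i) (q i) + dist (q i) (phat i) :=
      dist_triangle _ _ _
    have h3 : dist (q i) (phat i) ≤ dist (q i) (pstar i) := hphatNN i _ (hpsP i)
    have h4 : dist (pstar i) (q i) = dd i := by rw [hdd, dist_comm]
    rw [hdd] at *
    linarith
  -- pairwise quantities
  set MM : Fin k → Fin k → ℝ :=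
    fun i j => 9 * D (pstar i) + 9 * D (pstar j) + dist (pstar i) (pstar j) with hMM
  have hMMsym : ∀ i j, MM i j = MM j i := by
    intro i j; simp only [hMM]; rw [dist_comm]; ring
  have hMMnn : ∀ i j, 0 ≤ MM i j := by
    intro i j; simp only [hMM]
    have := hD0 (pstar i); have := hD0 (pstar j); have : (0:ℝ) ≤ dist (pstar i) (pstar j) := dist_nonneg
    linarith [hD0 (pstar i), hD0 (pstar j)]
  set c2 : Fin k → Fin k → Prop :=
    fun i j => 20 * dist (pstar i) (pstar j) < max (D (pstar i)) (D (pstar j)) with hc2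
  have hc2sym : ∀ i j, c2 i j → c2 j i := by
    intro i j h; simp only [hc2] at *; rwa [dist_comm, max_comm]
  -- the resolution parameter N
  set N : ℕ := 1 + 3 * ∑ i, ∑ j, ⌈MM i j / dist (pstar i) (pstar j)⌉₊ with hN
  have hN0 : 0 < N := by omega
  have hNR : (0:ℝ) < N := by exact_mod_cast hN0
  have hNge : ∀ i j, 3 * (MM i j / dist (pstar i) (pstar j)) ≤ (N:ℝ) := by
    intro i j
    have h1 : (⌈MM i j / dist (pstar i) (pstar j)⌉₊ : ℕ) ≤ ∑ i', ∑ j', ⌈MM i' j' / dist (pstar i') (pstar j')⌉₊ := by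
      calc (⌈MM i j / dist (pstar i) (pstar j)⌉₊ : ℕ)
          ≤ ∑ j', ⌈MM i j' / dist (pstar i) (pstar j')⌉₊ :=
            Finset.single_le_sum (f := fun j' => ⌈MM i j' / dist (pstar i) (pstar j')⌉₊)
              (fun j' _ => Nat.zero_le _) (Finset.mem_univ j)
        _ ≤ ∑ i', ∑ j', ⌈MM i' j' / dist (pstar i') (pstar j')⌉₊ :=
            Finset.single_le_sum (f := fun i' => ∑ j', ⌈MM i' j' / dist (pstar i') (pstar j')⌉₊)
              (fun i' _ => Nat.zero_le _) (Finset.mem_univ i)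
    have h2 : MM i j / dist (pstar i) (pstar j) ≤ (⌈MM i j / dist (pstar i) (pstar j)⌉₊ : ℝ) :=
      Nat.le_ceil _
    have h3 : (N:ℝ) = 1 + 3 * (∑ i', ∑ j', ⌈MM i' j' / dist (pstar i') (pstar j')⌉₊ : ℕ) := by
      rw [hN]; push_cast; ring
    have h4 : ((⌈MM i j / dist (pstar i) (pstar j)⌉₊ : ℕ) : ℝ)
        ≤ ((∑ i', ∑ j', ⌈MM i' j' / dist (pstar i') (pstar j')⌉₊ : ℕ) : ℝ) := by exact_mod_cast h1
    linarith
  -- padded decomposition data at every dyadic scale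
  have hPD' := fun t : ℤ => hPD ((2:ℝ)^t) (zpow_pos (by norm_num) t)
  choose m w col hw0 hw1 hdiam hsep using hPD'
  have hmne : ∀ t : ℤ, Nonempty (Fin (m t)) := by
    intro t
    rcases Nat.eq_zero_or_pos (m t) with h | h
    · exfalso
      have hempty : IsEmpty (Fin (m t)) := by rw [h]; infer_instance
      have : ∑ c : Fin (m t), w t c = 0 := by
        rw [Finset.univ_eq_empty, Finset.sum_empty]
      rw [hw1 t] at this
      norm_num at this
    · exact ⟨⟨0, h⟩⟩
  -- random-shift scale selection
  set τ : ℕ → X → ℤ := fun jj z => ⌈Real.logb 2 (D z) + (jj:ℝ)/(N:ℝ)⌉ with hτ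
  have h2pos : (0:ℝ) < 2 := by norm_num
  have hτ_ge : ∀ (jj : ℕ) (z : X), 0 < D z → D z ≤ (2:ℝ)^(τ jj z) := by
    intro jj z hz
    have h1 : Real.logb 2 (D z) ≤ ((τ jj z : ℤ) : ℝ) := by
      have := Int.le_ceil (Real.logb 2 (D z) + (jj:ℝ)/(N:ℝ))
      have hnn : (0:ℝ) ≤ (jj:ℝ)/(N:ℝ) := by positivity
      rw [hτ]
      push_cast
      linarith [this]
    calc D z = (2:ℝ) ^ (Real.logb 2 (D z)) := (Real.rpow_logb h2pos (by norm_num) hz).symm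
      _ ≤ (2:ℝ) ^ (((τ jj z : ℤ)) : ℝ) := by
          apply Real.rpow_le_rpow_left_iff (by norm_num : (1:ℝ) < 2) |>.mpr h1
      _ = (2:ℝ) ^ (τ jj z) := by
          rw [Real.rpow_intCast]
  have hτ_le : ∀ (jj : ℕ), jj < N → ∀ (z : X), 0 < D z → (2:ℝ)^(τ jj z) ≤ 4 * D z := by
    intro jj hjj z hz
    have hθ1 : (jj:ℝ)/(N:ℝ) < 1 := by
      rw [div_lt_one hNR]; exact_mod_cast hjj
    have h1 : ((τ jj z : ℤ) : ℝ) ≤ Real.logb 2 (D z) + 2 := by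
      have := Int.ceil_lt_add_one (Real.logb 2 (D z) + (jj:ℝ)/(N:ℝ))
      rw [hτ]
      push_cast
      linarith
    calc (2:ℝ) ^ (τ jj z) = (2:ℝ) ^ (((τ jj z : ℤ)) : ℝ) := by rw [Real.rpow_intCast]
      _ ≤ (2:ℝ) ^ (Real.logb 2 (D z) + 2) := by
          apply Real.rpow_le_rpow_left_iff (by norm_num : (1:ℝ) < 2) |>.mpr h1
      _ = (2:ℝ) ^ (Real.logb 2 (D z)) * (2:ℝ)^(2:ℝ) := by
          rw [← Real.rpow_add h2pos]
      _ = D z * 4 := by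
          rw [Real.rpow_logb h2pos (by norm_num) hz]
          norm_num
      _ = 4 * D z := by ring
  -- finite version of S
  set Sfin : Finset X := P ∪ Finset.image q Finset.univ with hSfin
  have hSfinS : ∀ x ∈ Sfin, x ∈ S := by
    intro x hx
    simp only [hSfin, Finset.mem_union, Finset.mem_image] at hx
    rcases hx with h | ⟨i, -, rfl⟩
    · exact hPS _ h
    · exact hqS i
  have hPSfin : ∀ x ∈ P, x ∈ Sfin := fun x hx => Finset.mem_union_left _ hx
  -- selection of the random shift θ*
  set B2v : ℕ → Fin k → Fin k → ℝ := fun jj i j =>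
    if c2 i j ∧ τ jj (pstar i) ≠ τ jj (pstar j) then MM i j else 0 with hB2v
  have hB2vsym : ∀ jj i j, B2v jj i j = B2v jj j i := by
    intro jj i j
    simp only [hB2v]
    by_cases h : c2 i j ∧ τ jj (pstar i) ≠ τ jj (pstar j)
    · rw [if_pos h, if_pos ⟨hc2sym _ _ h.1, h.2.symm⟩, hMMsym]
    · rw [if_neg h, if_neg ?_]
      rintro ⟨ha, hb⟩
      exact h ⟨hc2sym _ _ ha, hb.symm⟩
  have hB2vnn : ∀ jj i j, 0 ≤ B2v jj i j := by
    intro jj i j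
    simp only [hB2v]
    split
    · exact hMMnn i j
    · exact le_refl _
  set B2 : ℕ → Sym2 (Fin k) → ℝ := fun jj => Sym2.lift ⟨B2v jj, hB2vsym jj⟩ with hB2
  set g : ℕ → ℝ := fun jj => ∑ e ∈ G.edgeFinset, B2 jj e with hg
  obtain ⟨θs, hθsmem, hθsmin⟩ :=
    Finset.exists_min_image (Finset.range N) g ⟨0, Finset.mem_range.mpr hN0⟩
  have hθsN : θs < N := Finset.mem_range.mp hθsmem
  -- per-edge scale, separation costs, and the partition selection σ
  set tev : Fin k → Fin k → ℤ := fun i j => max (τ θs (pstar i)) (τ θs (pstar j)) with htev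
  have htevsym : ∀ i j, tev i j = tev j i := fun i j => max_comm _ _
  set te : Sym2 (Fin k) → ℤ := Sym2.lift ⟨tev, htevsym⟩ with hte
  set SCv : (t : ℤ) → Fin (m t) → Fin k → Fin k → ℝ := fun t c i j =>
    if c2 i j ∧ τ θs (pstar i) = τ θs (pstar j) ∧ col t c (pstar i) ≠ col t c (pstar j)
    then MM i j else 0 with hSCv
  have hSCvsym : ∀ t c i j, SCv t c i j = SCv t c j i := by
    intro t c i j
    simp only [hSCv]
    by_cases h : c2 i j ∧ τ θs (pstar i) = τ θs (pstar j) ∧ col t c (pstar i) ≠ col t c (pstar j)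
    · rw [if_pos h, if_pos ⟨hc2sym _ _ h.1, h.2.1.symm, h.2.2.symm⟩, hMMsym]
    · rw [if_neg h, if_neg ?_]
      rintro ⟨ha, hb, hc⟩
      exact h ⟨hc2sym _ _ ha, hb.symm, hc.symm⟩
  have hSCvnn : ∀ t c i j, 0 ≤ SCv t c i j := by
    intro t c i j
    simp only [hSCv]
    split
    · exact hMMnn i j
    · exact le_refl _
  set SC : (t : ℤ) → Fin (m t) → Sym2 (Fin k) → ℝ :=
    fun t c => Sym2.lift ⟨SCv t c, hSCvsym t c⟩ with hSC
  set Φ : (t : ℤ) → Fin (m t) → ℝ :=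
    fun t c => ∑ e ∈ G.edgeFinset, if te e = t then SC t c e else 0 with hΦ
  have hσex : ∀ t : ℤ, ∃ c : Fin (m t), ∀ c', Φ t c ≤ Φ t c' := by
    intro t
    have : Nonempty (Fin (m t)) := hmne t
    obtain ⟨c, -, hc⟩ := Finset.exists_min_image Finset.univ (Φ t) Finset.univ_nonempty
    exact ⟨c, fun c' => hc c' (Finset.mem_univ c')⟩
  choose σ hσ using hσex
  -- the retraction f
  set pickF : Finset X → X := fun s => if h : s.Nonempty then h.choose else x0 with hpickF
  have hpickFmem : ∀ (s : Finset X), s.Nonempty → pickF s ∈ s := by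
    intro s hs
    simp only [hpickF, dif_pos hs]
    exact hs.choose_spec
  set clu : X → Finset X := fun z =>
    Sfin.filter (fun y => col (τ θs z) (σ (τ θs z)) y = col (τ θs z) (σ (τ θs z)) z) with hclu
  have hcluz : ∀ z ∈ Sfin, z ∈ clu z := by
    intro z hz
    simp only [hclu]
    exact Finset.mem_filter.mpr ⟨hz, rfl⟩
  set f : X → X := fun z => if 0 < D z then π (pickF (clu z)) else π z with hf
  have hfT : ∀ z, f z ∈ T := by
    intro z
    simp only [hf]
    split
    · exact hπT _
    · exact hπT _
  -- vertex bound : dist z (f z) ≤ 9 * D z for z ∈ Sfin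
  have hf_vertex : ∀ z ∈ Sfin, dist z (f z) ≤ 9 * D z := by
    intro z hz
    by_cases hDz : 0 < D z
    · have hne : (clu z).Nonempty := ⟨z, hcluz z hz⟩
      set zz := pickF (clu z) with hzz
      have hzzmem : zz ∈ clu z := hpickFmem _ hne
      simp only [hclu, Finset.mem_filter] at hzzmem
      obtain ⟨hzzS, hzzcol⟩ := hzzmem
      have hdzz : dist zz z ≤ (2:ℝ) ^ (τ θs z) :=
        hdiam (τ θs z) (σ (τ θs z)) zz (hSfinS _ hzzS) z (hSfinS _ hz) hzzcol
      have h4 : (2:ℝ) ^ (τ θs z) ≤ 4 * D z := hτ_le θs hθsN z hDz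
      have hDzz : D zz ≤ D z + dist zz z := hDlip zz z
      have hfz : f z = π zz := by simp only [hf, if_pos hDz, hzz]
      calc dist z (f z) ≤ dist z zz + dist zz (f z) := dist_triangle _ _ _
        _ = dist z zz + D zz := by rw [hfz, hπdist]
        _ ≤ dist z zz + (D z + dist zz z) := by linarith
        _ = 2 * dist zz z + D z := by rw [dist_comm z zz]; ring
        _ ≤ 2 * (4 * D z) + D z := by linarith
        _ = 9 * D z := by ring
    · have hDz0 : D z = 0 := le_antisymm (not_lt.mp hDz) (hD0 z)
      have hfz : f z = π z := by simp only [hf, if_neg hDz]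
      rw [hfz, hπdist, hDz0]
      norm_num
  -- equal clusters at equal scales give equal images
  have hf_eq : ∀ z ∈ Sfin, ∀ y ∈ Sfin, 0 < D z → 0 < D y →
      τ θs z = τ θs y →
      col (τ θs z) (σ (τ θs z)) z = col (τ θs z) (σ (τ θs z)) y → f z = f y := by
    intro z hz y hy hDz hDy hτeq hcol
    have hcol' : col (τ θs y) (σ (τ θs y)) z = col (τ θs y) (σ (τ θs y)) y := by
      rw [← hτeq]; exact hcol
    have hcluq : clu z = clu y := by
      simp only [hclu]
      apply Finset.filter_congr
      intro u _
      rw [hτeq, hcol']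
    simp only [hf, if_pos hDz, if_pos hDy, hcluq]
  -- both endpoints of a `c2` pair are far from T
  have hc2pos : ∀ i j, c2 i j → 0 < D (pstar i) ∧ 0 < D (pstar j) := by
    intro i j hc2ij
    simp only [hc2] at hc2ij
    have hLnn : (0:ℝ) ≤ dist (pstar i) (pstar j) := dist_nonneg
    have h1 : D (pstar i) ≤ D (pstar j) + dist (pstar i) (pstar j) := hDlip _ _
    have h2 : D (pstar j) ≤ D (pstar i) + dist (pstar j) (pstar i) := hDlip _ _
    rw [dist_comm] at h2
    rcases le_total (D (pstar i)) (D (pstar j)) with h | h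
    · rw [max_eq_right h] at hc2ij
      constructor <;> linarith
    · rw [max_eq_left h] at hc2ij
      constructor <;> linarith
  -- the per-edge master bound
  have hedge : ∀ i j, dist (f (pstar i)) (f (pstar j)) ≤
      361 * δ * dist (pstar i) (pstar j) + B2v θs i j
        + SCv (tev i j) (σ (tev i j)) i j := by
    intro i j
    have hLnn : (0:ℝ) ≤ dist (pstar i) (pstar j) := dist_nonneg
    have hB2nn := hB2vnn θs i j
    have hSCnn := hSCvnn (tev i j) (σ (tev i j)) i j
    have hdnn : 0 ≤ 361 * δ * dist (pstar i) (pstar j) := by positivity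
    have hMb : dist (f (pstar i)) (f (pstar j)) ≤ MM i j := by
      have h1 := hf_vertex (pstar i) (hPSfin _ (hpsP i))
      have h2 := hf_vertex (pstar j) (hPSfin _ (hpsP j))
      calc dist (f (pstar i)) (f (pstar j))
          ≤ dist (f (pstar i)) (pstar i) + dist (pstar i) (f (pstar j)) := dist_triangle _ _ _
        _ ≤ dist (f (pstar i)) (pstar i) + (dist (pstar i) (pstar j) + dist (pstar j) (f (pstar j))) := by
            linarith [dist_triangle (pstar i) (pstar j) (f (pstar j))]
        _ = dist (pstar i) (f (pstar i)) + dist (pstar j) (f (pstar j)) + dist (pstar i) (pstar j) := by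
            rw [dist_comm (f (pstar i)) (pstar i)]; ring
        _ ≤ 9 * D (pstar i) + 9 * D (pstar j) + dist (pstar i) (pstar j) := by linarith
        _ = MM i j := by rw [hMM]
    by_cases hc2ij : c2 i j
    · by_cases hτij : τ θs (pstar i) = τ θs (pstar j)
      · obtain ⟨hDi, hDj⟩ := hc2pos i j hc2ij
        have htevij : tev i j = τ θs (pstar i) := by
          simp only [htev, hτij, max_self]
        by_cases hcol : col (tev i j) (σ (tev i j)) (pstar i)
            = col (tev i j) (σ (tev i j)) (pstar j)
        · have hfeq : f (pstar i) = f (pstar j) := by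
            apply hf_eq (pstar i) (hPSfin _ (hpsP i)) (pstar j) (hPSfin _ (hpsP j)) hDi hDj hτij
            rw [← htevij]
            exact hcol
          rw [hfeq, dist_self]
          linarith
        · have hSCval : SCv (tev i j) (σ (tev i j)) i j = MM i j := by
            simp only [hSCv]
            rw [if_pos ⟨hc2ij, hτij, hcol⟩]
          rw [hSCval]
          linarith
      · have hB2val : B2v θs i j = MM i j := by
          simp only [hB2v]
          rw [if_pos ⟨hc2ij, hτij⟩]
        rw [hB2val]
        linarith
    · -- both D's small : deterministic bound
      simp only [hc2, not_lt] at hc2ij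
      have hDi : D (pstar i) ≤ 20 * dist (pstar i) (pstar j) :=
        le_trans (le_max_left _ _) hc2ij
      have hDj : D (pstar j) ≤ 20 * dist (pstar i) (pstar j) :=
        le_trans (le_max_right _ _) hc2ij
      have hMle : MM i j ≤ 361 * dist (pstar i) (pstar j) := by
        rw [hMM]; dsimp only; linarith
      have hLδ : dist (pstar i) (pstar j) ≤ δ * dist (pstar i) (pstar j) := by
        have h := mul_le_mul_of_nonneg_right hδ1 hLnn
        simpa using h
      linarith
  -- per-pair counting bound for the random shift
  have hcountv : ∀ i j, (∑ jj ∈ Finset.range N, B2v jj i j)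
      ≤ (N:ℝ) * (81 * dist (pstar i) (pstar j)) := by
    intro i j
    have hLnn : (0:ℝ) ≤ dist (pstar i) (pstar j) := dist_nonneg
    by_cases hc2ij : c2 i j
    · by_cases hLz : pstar i = pstar j
      · have hz : ∀ jj, B2v jj i j = 0 := by
          intro jj
          simp only [hB2v]
          rw [if_neg]
          rintro ⟨-, hne⟩
          exact hne (by rw [hLz])
        rw [Finset.sum_congr rfl (fun jj _ => hz jj), Finset.sum_const_zero]
        positivity
      · have hLpos : 0 < dist (pstar i) (pstar j) := dist_pos.mpr hLz
        have hfe : (Finset.range N).filter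
              (fun jj => c2 i j ∧ τ jj (pstar i) ≠ τ jj (pstar j))
            = (Finset.range N).filter (fun jj => τ jj (pstar i) ≠ τ jj (pstar j)) :=
          Finset.filter_congr (fun jj _ => by simp [hc2ij])
        have hsum : (∑ jj ∈ Finset.range N, B2v jj i j)
            = (((Finset.range N).filter
                (fun jj => τ jj (pstar i) ≠ τ jj (pstar j))).card : ℝ) * MM i j := by
          simp only [hB2v]
          rw [Finset.sum_ite, Finset.sum_const, Finset.sum_const_zero, add_zero,
            nsmul_eq_mul, hfe]
        have h1 : D (pstar i) ≤ D (pstar j) + dist (pstar i) (pstar j) := hDlip _ _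
        have h2 : D (pstar j) ≤ D (pstar i) + dist (pstar i) (pstar j) := by
          have h := hDlip (pstar j) (pstar i)
          rwa [dist_comm] at h
        have hNL : 3 * MM i j ≤ (N:ℝ) * dist (pstar i) (pstar j) := by
          have h := hNge i j
          have h' := mul_le_mul_of_nonneg_right h hLpos.le
          calc 3 * MM i j
              = 3 * (MM i j / dist (pstar i) (pstar j)) * dist (pstar i) (pstar j) := by
                field_simp
            _ ≤ (N:ℝ) * dist (pstar i) (pstar j) := h'
        rw [hsum]
        rcases le_total (D (pstar j)) (D (pstar i)) with hvu | hvu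
        · have hc2' : 20 * dist (pstar i) (pstar j) < D (pstar i) := by
            have h := hc2ij
            simp only [hc2] at h
            rwa [max_eq_left hvu] at h
          have hkey := edge_count_bound N hN0 (D (pstar i)) (D (pstar j))
            (dist (pstar i) (pstar j)) (MM i j) hLpos hvu hc2' h1 (by rw [hMM]) hNL
          have hflip : (Finset.range N).filter (fun jj => τ jj (pstar i) ≠ τ jj (pstar j))
              = (Finset.range N).filter (fun (jj:ℕ) =>
                  ⌈Real.logb 2 (D (pstar j)) + (jj:ℝ)/N⌉
                    ≠ ⌈Real.logb 2 (D (pstar i)) + (jj:ℝ)/N⌉) := by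
            apply Finset.filter_congr
            intro jj _
            simp only [hτ]
            exact ne_comm
          rw [hflip]
          exact hkey
        · have hc2' : 20 * dist (pstar i) (pstar j) < D (pstar j) := by
            have h := hc2ij
            simp only [hc2] at h
            rwa [max_eq_right hvu] at h
          have hkey := edge_count_bound N hN0 (D (pstar j)) (D (pstar i))
            (dist (pstar i) (pstar j)) (MM i j) hLpos hvu hc2' h2 (by rw [hMM]; ring) hNL
          have hflip : (Finset.range N).filter (fun jj => τ jj (pstar i) ≠ τ jj (pstar j))
              = (Finset.range N).filter (fun (jj:ℕ) =>
                  ⌈Real.logb 2 (D (pstar i)) + (jj:ℝ)/N⌉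
                    ≠ ⌈Real.logb 2 (D (pstar j)) + (jj:ℝ)/N⌉) := by
            apply Finset.filter_congr
            intro jj _
            simp only [hτ]
          rw [hflip]
          exact hkey
    · have hz : ∀ jj, B2v jj i j = 0 := by
        intro jj
        simp only [hB2v]
        rw [if_neg]
        rintro ⟨hcc, -⟩
        exact hc2ij hcc
      rw [Finset.sum_congr rfl (fun jj _ => hz jj), Finset.sum_const_zero]
      positivity
  -- the assignment
  set p : Fin k → X := fun i => f (pstar i) with hp
  have hpmem : ∀ i, ∃ j, p i = phat j := by
    intro i
    have h := hfT (pstar i)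
    simp only [hT, Finset.mem_image] at h
    obtain ⟨j, -, hj⟩ := h
    exact ⟨j, by simp only [hp]; exact hj.symm⟩
  -- edge sum : pointwise bound
  have hpairp : ∀ e ∈ G.edgeFinset, pairDist p e
      ≤ 361 * δ * pairDist pstar e + B2 θs e + SC (te e) (σ (te e)) e := by
    intro e _
    induction e using Sym2.ind with
    | _ i j =>
      simp only [pairDist, hB2, hSC, hte, Sym2.lift_mk, hp]
      exact hedge i j
  have hedgesum : ∑ e ∈ G.edgeFinset, pairDist p e ≤
      361 * δ * (∑ e ∈ G.edgeFinset, pairDist pstar e)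
        + (∑ e ∈ G.edgeFinset, B2 θs e)
        + (∑ e ∈ G.edgeFinset, SC (te e) (σ (te e)) e) := by
    have h := Finset.sum_le_sum hpairp
    calc ∑ e ∈ G.edgeFinset, pairDist p e
        ≤ ∑ e ∈ G.edgeFinset,
            (361 * δ * pairDist pstar e + B2 θs e + SC (te e) (σ (te e)) e) := h
      _ = 361 * δ * (∑ e ∈ G.edgeFinset, pairDist pstar e)
            + (∑ e ∈ G.edgeFinset, B2 θs e)
            + (∑ e ∈ G.edgeFinset, SC (te e) (σ (te e)) e) := by
          rw [Finset.sum_add_distrib, Finset.sum_add_distrib, Finset.mul_sum]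
  -- bound on the B2 sum via the choice of θ*
  have hB2sum : (∑ e ∈ G.edgeFinset, B2 θs e)
      ≤ 81 * (∑ e ∈ G.edgeFinset, pairDist pstar e) := by
    have hcard : (Finset.range N).card • g θs ≤ ∑ jj ∈ Finset.range N, g jj :=
      Finset.card_nsmul_le_sum _ _ _ hθsmin
    rw [Finset.card_range, nsmul_eq_mul] at hcard
    have hswap : ∑ jj ∈ Finset.range N, g jj
        = ∑ e ∈ G.edgeFinset, ∑ jj ∈ Finset.range N, B2 jj e := by
      simp only [hg]
      exact Finset.sum_comm
    have hperedge : ∀ e ∈ G.edgeFinset, (∑ jj ∈ Finset.range N, B2 jj e)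
        ≤ (N:ℝ) * (81 * pairDist pstar e) := by
      intro e _
      induction e using Sym2.ind with
      | _ i j =>
        simp only [hB2, Sym2.lift_mk, pairDist]
        exact hcountv i j
    have hchain : (N:ℝ) * g θs
        ≤ (N:ℝ) * (81 * ∑ e ∈ G.edgeFinset, pairDist pstar e) := by
      calc (N:ℝ) * g θs ≤ ∑ jj ∈ Finset.range N, g jj := hcard
        _ = ∑ e ∈ G.edgeFinset, ∑ jj ∈ Finset.range N, B2 jj e := hswap
        _ ≤ ∑ e ∈ G.edgeFinset, (N:ℝ) * (81 * pairDist pstar e) :=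
            Finset.sum_le_sum hperedge
        _ = (N:ℝ) * (81 * ∑ e ∈ G.edgeFinset, pairDist pstar e) := by
            rw [← Finset.mul_sum, ← Finset.mul_sum]
    have := le_of_mul_le_mul_left hchain hNR
    simpa only [hg] using this
  -- bound on the separation sum via the choice of σ
  have hSCbound : ∀ (t : ℤ) (i j : Fin k), tev i j = t →
      (∑ c, w t c * SCv t c i j) ≤ 19 * δ * dist (pstar i) (pstar j) := by
    intro t i j hteq
    have hLnn : (0:ℝ) ≤ dist (pstar i) (pstar j) := dist_nonneg
    by_cases hcond : c2 i j ∧ τ θs (pstar i) = τ θs (pstar j)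
    · obtain ⟨hc2ij, hτij⟩ := hcond
      obtain ⟨hDi, hDj⟩ := hc2pos i j hc2ij
      have ht : t = τ θs (pstar i) := by
        rw [← hteq]
        simp only [htev, hτij, max_self]
      have h2ti : D (pstar i) ≤ (2:ℝ)^t := by
        rw [ht]; exact hτ_ge θs _ hDi
      have h2tj : D (pstar j) ≤ (2:ℝ)^t := by
        rw [ht, hτij]; exact hτ_ge θs _ hDj
      have h2tpos : (0:ℝ) < (2:ℝ)^t := zpow_pos (by norm_num) t
      have hc2' : 20 * dist (pstar i) (pstar j) < max (D (pstar i)) (D (pstar j)) := by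
        have h := hc2ij
        simp only [hc2] at h
        exact h
      have hLt : 20 * dist (pstar i) (pstar j) ≤ (2:ℝ)^t := by
        have := max_le h2ti h2tj
        linarith
      have hM19 : MM i j ≤ 19 * (2:ℝ)^t := by
        rw [hMM]
        dsimp only
        linarith
      have hsum : (∑ c, w t c * SCv t c i j)
          = (∑ c, if col t c (pstar i) = col t c (pstar j) then 0 else w t c) * MM i j := by
        rw [Finset.sum_mul]
        apply Finset.sum_congr rfl
        intro c _
        simp only [hSCv]
        by_cases hcol : col t c (pstar i) = col t c (pstar j)
        · rw [if_pos hcol, if_neg (by rintro ⟨-,-,hne⟩; exact hne hcol)]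
          ring
        · rw [if_neg hcol, if_pos ⟨hc2ij, hτij, hcol⟩]
      rw [hsum]
      have hsep' := hsep t (pstar i) (hpsS i) (pstar j) (hpsS j)
      have hMnn : 0 ≤ MM i j := hMMnn i j
      have hsepnn : (0:ℝ) ≤ δ * dist (pstar i) (pstar j) / (2:ℝ)^t := by positivity
      calc (∑ c, if col t c (pstar i) = col t c (pstar j) then 0 else w t c) * MM i j
          ≤ (δ * dist (pstar i) (pstar j) / (2:ℝ)^t) * MM i j :=
            mul_le_mul_of_nonneg_right hsep' hMnn
        _ ≤ (δ * dist (pstar i) (pstar j) / (2:ℝ)^t) * (19 * (2:ℝ)^t) :=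
            mul_le_mul_of_nonneg_left hM19 hsepnn
        _ = 19 * δ * dist (pstar i) (pstar j) := by
            field_simp
    · have hz : ∀ c, SCv t c i j = 0 := by
        intro c
        simp only [hSCv]
        rw [if_neg]
        rintro ⟨hzz1, hzz2, -⟩
        exact hcond ⟨hzz1, hzz2⟩
      rw [Finset.sum_congr rfl (fun c _ => by rw [hz c, mul_zero]), Finset.sum_const_zero]
      positivity
  have hSCbound' : ∀ (t : ℤ) (e : Sym2 (Fin k)), te e = t →
      (∑ c, w t c * SC t c e) ≤ 19 * δ * pairDist pstar e := by
    intro t e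
    induction e using Sym2.ind with
    | _ i j =>
      intro h
      simp only [hSC, Sym2.lift_mk, pairDist]
      refine hSCbound t i j ?_
      simpa only [hte, Sym2.lift_mk] using h
  have hB3sum : (∑ e ∈ G.edgeFinset, SC (te e) (σ (te e)) e)
      ≤ 19 * δ * (∑ e ∈ G.edgeFinset, pairDist pstar e) := by
    set Ts : Finset ℤ := G.edgeFinset.image te with hTs
    have h1 : ∀ e ∈ G.edgeFinset, SC (te e) (σ (te e)) e
        = ∑ t ∈ Ts, (if te e = t then SC t (σ t) e else 0) := by
      intro e he
      rw [Finset.sum_ite_eq Ts (te e) (fun t => SC t (σ t) e),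
        if_pos (Finset.mem_image_of_mem _ he)]
    calc ∑ e ∈ G.edgeFinset, SC (te e) (σ (te e)) e
        = ∑ e ∈ G.edgeFinset, ∑ t ∈ Ts, (if te e = t then SC t (σ t) e else 0) :=
          Finset.sum_congr rfl h1
      _ = ∑ t ∈ Ts, ∑ e ∈ G.edgeFinset, (if te e = t then SC t (σ t) e else 0) :=
          Finset.sum_comm
      _ = ∑ t ∈ Ts, Φ t (σ t) := by simp only [hΦ]
      _ ≤ ∑ t ∈ Ts, ∑ c, w t c * Φ t c :=
          Finset.sum_le_sum fun t _ =>
            min_le_weighted_sum (w t) (Φ t) (hw0 t) (hw1 t) (σ t) (hσ t)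
      _ = ∑ t ∈ Ts, ∑ e ∈ G.edgeFinset,
            (if te e = t then ∑ c, w t c * SC t c e else 0) := by
          apply Finset.sum_congr rfl
          intro t _
          calc ∑ c, w t c * Φ t c
              = ∑ c, ∑ e ∈ G.edgeFinset, w t c * (if te e = t then SC t c e else 0) := by
                simp only [hΦ, Finset.mul_sum]
            _ = ∑ e ∈ G.edgeFinset, ∑ c, w t c * (if te e = t then SC t c e else 0) :=
                Finset.sum_comm
            _ = ∑ e ∈ G.edgeFinset, (if te e = t then ∑ c, w t c * SC t c e else 0) := by
                apply Finset.sum_congr rfl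
                intro e _
                by_cases h : te e = t
                · simp [h, Finset.mul_sum]
                · simp [h]
      _ ≤ ∑ t ∈ Ts, ∑ e ∈ G.edgeFinset,
            (if te e = t then 19 * δ * pairDist pstar e else 0) := by
          apply Finset.sum_le_sum
          intro t _
          apply Finset.sum_le_sum
          intro e _
          by_cases h : te e = t
          · rw [if_pos h, if_pos h]
            exact hSCbound' t e h
          · rw [if_neg h, if_neg h]
      _ = ∑ e ∈ G.edgeFinset, ∑ t ∈ Ts,
            (if te e = t then 19 * δ * pairDist pstar e else 0) := Finset.sum_comm
      _ = ∑ e ∈ G.edgeFinset, 19 * δ * pairDist pstar e := by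
          apply Finset.sum_congr rfl
          intro e he
          rw [Finset.sum_ite_eq Ts (te e) (fun _ => 19 * δ * pairDist pstar e),
            if_pos (Finset.mem_image_of_mem _ he)]
      _ = 19 * δ * (∑ e ∈ G.edgeFinset, pairDist pstar e) := by
          rw [← Finset.mul_sum]
  -- vertex sum
  have hvert : (∑ i, dist (q i) (p i)) ≤ 19 * ∑ i, dd i := by
    rw [Finset.mul_sum]
    apply Finset.sum_le_sum
    intro i _
    have h1 : dist (q i) (p i) ≤ dist (q i) (pstar i) + dist (pstar i) (f (pstar i)) := by
      simp only [hp]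
      exact dist_triangle _ _ _
    have h2 := hf_vertex (pstar i) (hPSfin _ (hpsP i))
    have h3 := hDdd i
    have h4 : dist (q i) (pstar i) = dd i := by rw [hdd]
    linarith
  -- final assembly
  refine ⟨p, hpmem, ?_⟩
  intro ps hps
  have hopt : cost pstar ≤ cost ps := hpstaropt ps (Fintype.mem_piFinset.mpr hps)
  have hA0 : (0:ℝ) ≤ ∑ i, dd i := Finset.sum_nonneg fun i _ => hdd0 i
  have hB0 : (0:ℝ) ≤ ∑ e ∈ G.edgeFinset, pairDist pstar e :=
    Finset.sum_nonneg fun e _ => hpairnn pstar e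
  have hcoststar : cost pstar = (∑ i, dd i) + ∑ e ∈ G.edgeFinset, pairDist pstar e := by
    simp only [hcost, hdd]
  have hcostps : cost ps = (∑ i, dist (q i) (ps i)) + ∑ e ∈ G.edgeFinset, pairDist ps e := by
    simp only [hcost]
  have hAδ : (∑ i, dd i) ≤ δ * ∑ i, dd i := by
    have h := mul_le_mul_of_nonneg_right hδ1 hA0
    simpa using h
  have hBδ : (∑ e ∈ G.edgeFinset, pairDist pstar e)
      ≤ δ * ∑ e ∈ G.edgeFinset, pairDist pstar e := by
    have h := mul_le_mul_of_nonneg_right hδ1 hB0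
    simpa using h
  have hcostps0 : 0 ≤ cost ps := by rw [hcostps]; exact hcostnn ps
  have hδcost : δ * cost pstar ≤ δ * cost ps := mul_le_mul_of_nonneg_left hopt hδ.le
  have hδcost0 : 0 ≤ δ * cost ps := mul_nonneg hδ.le hcostps0
  have hLHS : ∑ i, dist (q i) (p i) + ∑ e ∈ G.edgeFinset, pairDist p e
      ≤ 461 * (δ * cost pstar) := by
    have hsplit : δ * cost pstar
        = δ * (∑ i, dd i) + δ * (∑ e ∈ G.edgeFinset, pairDist pstar e) := by
      rw [hcoststar]; ring
    have hAδ0 : 0 ≤ δ * (∑ i, dd i) := mul_nonneg hδ.le hA0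
    have hBδ0 : 0 ≤ δ * (∑ e ∈ G.edgeFinset, pairDist pstar e) := mul_nonneg hδ.le hB0
    nlinarith [hvert, hedgesum, hB2sum, hB3sum, hAδ, hBδ, hsplit, hAδ0, hBδ0]
  calc ∑ i, dist (q i) (p i) + ∑ e ∈ G.edgeFinset, pairDist p e
      ≤ 461 * (δ * cost pstar) := hLHS
    _ ≤ 461 * (δ * cost ps) := by linarith
    _ ≤ 1000 * (δ * cost ps) := by linarith
    _ = 1000 * δ * ((∑ i, dist (q i) (ps i)) + ∑ e ∈ G.edgeFinset, pairDist ps e) := by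
        rw [hcostps]; ring
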